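/- Let (G,·,e,⊙) be a left group-e-semigroup. Then e⊙G is an ideal of the semigroup (G,⊙) if and only if e⊙e is central in (G,⊙), i.e. (e⊙e)⊙x = x⊙(e⊙e) for all x ∈ G. -/
import Mathlib


/-- A subset `I` is an ideal of the semigroup `(G, op)`. -/
def IsMagmaIdeal {G : Type*} (op : G → G → G) (I : Set G) : Prop :=
  ∀ x : G, ∀ i ∈ I, op x i ∈ I ∧ op i x ∈ I

/-- In a left group-`e`-semigroup `(G, ·, e, ⊙)` (group identity `e = 1`),
the set `e ⊙ G` is an ideal of the semigroup `(G, ⊙)` if and only if `e ⊙ e` is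
central in `(G, ⊙)`. -/
theorem stmt_1 {G : Type*} [Group G] (op : G → G → G)
    (hassoc : ∀ x y z : G, op (op x y) z = op x (op y z))
    (hjoin : ∀ x y : G, op 1 (x * y) = op 1 (op x y)) :
    IsMagmaIdeal op (Set.range (op 1)) ↔ ∀ x : G, op (op 1 1) x = op x (op 1 1) := by
  have h1 : ∀ a b : G, op (op 1 a) b = op 1 (a * b) := fun a b => by
    rw [hassoc, hjoin]
  constructor
  · intro h x
    -- hB : the value of x ⊙ (1 ⊙ y) is explicitly 1 ⊙ (x * (1 ⊙ y))
    have hB : ∀ a y : G, op a (op 1 y) = op 1 (a * op 1 y) := by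
      intro a y
      obtain ⟨z, hz⟩ := (h a (op 1 y) ⟨y, rfl⟩).1
      calc op a (op 1 y) = op 1 z := hz.symm
        _ = op 1 (1 * z) := by rw [one_mul]
        _ = op 1 (op 1 z) := hjoin 1 z
        _ = op 1 (op a (op 1 y)) := by rw [hz]
        _ = op 1 (a * op 1 y) := (hjoin a (op 1 y)).symm
    set c : G := op 1 1 with hc
    have hcc : op c⁻¹ c = c := by
      rw [hc, hB c⁻¹ 1, ← hc, inv_mul_cancel]
    have hxc : ∀ a : G, op 1 (a * c) = op 1 a := by
      intro a
      calc op 1 (a * c) = op (op 1 a) c := (h1 a c).symm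
        _ = op (op 1 a) (op c⁻¹ c) := by rw [hcc]
        _ = op (op (op 1 a) c⁻¹) c := (hassoc _ _ _).symm
        _ = op (op 1 (a * c⁻¹)) c := by rw [h1]
        _ = op 1 (a * c⁻¹ * c) := h1 _ _
        _ = op 1 a := by rw [mul_assoc, inv_mul_cancel, mul_one]
    calc op c x = op 1 (1 * x) := by rw [hc, h1]
      _ = op 1 x := by rw [one_mul]
      _ = op 1 (x * c) := (hxc x).symm
      _ = op x c := by rw [hc, ← hB x 1]
  · intro h x i hi
    obtain ⟨y, rfl⟩ := hi
    constructor
    · refine ⟨x * y, ?_⟩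
      have hy : op 1 y = op (op 1 1) y := by rw [h1, one_mul]
      rw [hy, ← hassoc, ← h, hassoc, h1, one_mul, ← hjoin]
    · exact ⟨y * x, (h1 y x).symm⟩
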